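/- If a monochromatic graph G contains a spanning complete bipartite subgraph H such that each partite set of H contains an edge of G, then pc_opt(G) ≤ 3. -/

import Mathlib

open SimpleGraph

/-- A walk is properly colored: no two consecutive edges share a color. -/
def ProperWalk {V : Type*} {G : SimpleGraph V} (c : Sym2 V → ℕ) {u v : V} (p : G.Walk u v) : Prop :=
  (p.edges.map c).Chain' (· ≠ ·)

/-- An edge-colored graph is properly connected. -/
def ProperlyConnected {V : Type*} (G : SimpleGraph V) (c : Sym2 V → ℕ) : Prop :=
  ∀ u v : V, u ≠ v → ∃ p : G.Walk u v, p.IsPath ∧ ProperWalk c p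

/-- Number of edges recolored away from the base color 0. -/
noncomputable def numRecolored {V : Type*} (G : SimpleGraph V) (c : Sym2 V → ℕ) : ℕ :=
  {e | e ∈ G.edgeSet ∧ c e ≠ 0}.ncard

/-- Number of new colors used. -/
noncomputable def numNewColors {V : Type*} (G : SimpleGraph V) (c : Sym2 V → ℕ) : ℕ :=
  (c '' {e | e ∈ G.edgeSet ∧ c e ≠ 0}).ncard

/-- Optimal proper connection number: minimum of p + q. -/
noncomputable def pcOpt {V : Type*} (G : SimpleGraph V) : ℕ :=
  sInf { n | ∃ c : Sym2 V → ℕ, ProperlyConnected G c ∧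
    n = numRecolored G c + numNewColors G c }

theorem stmt6 {V : Type*} [Fintype V] (G : SimpleGraph V) (hconn : G.Connected)
    (A₁ A₂ : Set V) (hdisj : Disjoint A₁ A₂) (hun : A₁ ∪ A₂ = Set.univ)
    (hbip : ∀ a ∈ A₁, ∀ b ∈ A₂, G.Adj a b)
    (he₁ : ∃ a ∈ A₁, ∃ b ∈ A₁, G.Adj a b)
    (he₂ : ∃ a ∈ A₂, ∃ b ∈ A₂, G.Adj a b) :
    pcOpt G ≤ 3 := by
  classical
  obtain ⟨x₁, hx₁, y₁, hy₁, hadj₁⟩ := he₁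
  obtain ⟨x₂, hx₂, y₂, hy₂, hadj₂⟩ := he₂
  have hmem : ∀ v : V, v ∈ A₁ ∨ v ∈ A₂ := fun v => by
    have : v ∈ A₁ ∪ A₂ := hun.symm ▸ Set.mem_univ v
    exact this
  have hne12 : ∀ a ∈ A₁, ∀ b ∈ A₂, a ≠ b := fun a ha b hb h => by
    exact Set.disjoint_left.mp hdisj ha (h ▸ hb)
  set c : Sym2 V → ℕ := fun e => if e = s(x₁, y₁) ∨ e = s(x₂, y₂) then 1 else 0 with hc
  have hcross : ∀ a ∈ A₁, ∀ b ∈ A₂, c s(a, b) = 0 := by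
    intro a ha b hb
    have hno : ¬(s(a, b) = s(x₁, y₁) ∨ s(a, b) = s(x₂, y₂)) := by
      rintro (h | h) <;> rw [Sym2.eq_iff] at h <;> rcases h with ⟨h1, h2⟩ | ⟨h1, h2⟩
      · exact hne12 y₁ hy₁ b hb h2.symm
      · exact hne12 x₁ hx₁ b hb h2.symm
      · exact hne12 a ha x₂ hx₂ h1
      · exact hne12 a ha y₂ hy₂ h1
    simp only [hc]
    exact if_neg hno
  have hcross' : ∀ a ∈ A₂, ∀ b ∈ A₁, c s(a, b) = 0 := by
    intro a ha b hb
    rw [Sym2.eq_swap]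
    exact hcross b hb a ha
  have hc1 : c s(x₁, y₁) = 1 := if_pos (Or.inl rfl)
  have hc2 : c s(x₂, y₂) = 1 := if_pos (Or.inr rfl)
  have hpc : ProperlyConnected G c := by
    intro u v huv
    rcases hmem u with hu | hu <;> rcases hmem v with hv | hv
    · -- both in A₁: u - x₂ - y₂ - v
      have a1 : G.Adj u x₂ := hbip u hu x₂ hx₂
      have a2 : G.Adj x₂ y₂ := hadj₂
      have a3 : G.Adj y₂ v := (hbip v hv y₂ hy₂).symm
      refine ⟨Walk.cons a1 (Walk.cons a2 (Walk.cons a3 Walk.nil)), ?_, ?_⟩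
      · rw [Walk.isPath_def]
        simp only [Walk.support_cons, Walk.support_nil]
        refine List.nodup_cons.mpr ⟨?_, List.nodup_cons.mpr ⟨?_, List.nodup_cons.mpr ⟨?_, List.nodup_singleton v⟩⟩⟩
        · simp only [List.mem_cons, List.not_mem_nil, or_false]
          push_neg
          exact ⟨hne12 u hu x₂ hx₂, hne12 u hu y₂ hy₂, huv⟩
        · simp only [List.mem_cons, List.not_mem_nil, or_false]
          push_neg
          exact ⟨a2.ne, fun h => hne12 v hv x₂ hx₂ h.symm⟩
        · simp only [List.mem_cons, List.not_mem_nil, or_false]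
          exact fun h => hne12 v hv y₂ hy₂ h.symm
      · unfold ProperWalk
        simp only [Walk.edges_cons, Walk.edges_nil, List.map_cons, List.map_nil]
        rw [hcross u hu x₂ hx₂, hc2, hcross' y₂ hy₂ v hv]
        simp [List.Chain']
    · -- u ∈ A₁, v ∈ A₂: edge
      refine ⟨Walk.cons (hbip u hu v hv) Walk.nil, ?_, ?_⟩
      · simp [Walk.isPath_def, huv]
      · unfold ProperWalk
        simp [List.Chain']
    · -- u ∈ A₂, v ∈ A₁
      refine ⟨Walk.cons ((hbip v hv u hu).symm) Walk.nil, ?_, ?_⟩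
      · simp [Walk.isPath_def, huv]
      · unfold ProperWalk
        simp [List.Chain']
    · -- both in A₂: u - x₁ - y₁ - v
      have a1 : G.Adj u x₁ := (hbip x₁ hx₁ u hu).symm
      have a2 : G.Adj x₁ y₁ := hadj₁
      have a3 : G.Adj y₁ v := hbip y₁ hy₁ v hv
      refine ⟨Walk.cons a1 (Walk.cons a2 (Walk.cons a3 Walk.nil)), ?_, ?_⟩
      · rw [Walk.isPath_def]
        simp only [Walk.support_cons, Walk.support_nil]
        refine List.nodup_cons.mpr ⟨?_, List.nodup_cons.mpr ⟨?_, List.nodup_cons.mpr ⟨?_, List.nodup_singleton v⟩⟩⟩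
        · simp only [List.mem_cons, List.not_mem_nil, or_false]
          push_neg
          exact ⟨fun h => hne12 x₁ hx₁ u hu h.symm, fun h => hne12 y₁ hy₁ u hu h.symm, huv⟩
        · simp only [List.mem_cons, List.not_mem_nil, or_false]
          push_neg
          exact ⟨a2.ne, hne12 x₁ hx₁ v hv⟩
        · simp only [List.mem_cons, List.not_mem_nil, or_false]
          exact hne12 y₁ hy₁ v hv
      · unfold ProperWalk
        simp only [Walk.edges_cons, Walk.edges_nil, List.map_cons, List.map_nil]
        rw [hcross' u hu x₁ hx₁, hc1, hcross y₁ hy₁ v hv]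
        simp [List.Chain']
  have hset : {e | e ∈ G.edgeSet ∧ c e ≠ 0} = {s(x₁, y₁), s(x₂, y₂)} := by
    ext e
    simp only [Set.mem_setOf_eq, Set.mem_insert_iff, Set.mem_singleton_iff, hc]
    constructor
    · rintro ⟨_, hne⟩
      by_contra h
      push_neg at h
      rw [if_neg (by tauto)] at hne
      exact hne rfl
    · rintro (rfl | rfl)
      · exact ⟨hadj₁, by rw [if_pos (Or.inl rfl)]; norm_num⟩
      · exact ⟨hadj₂, by rw [if_pos (Or.inr rfl)]; norm_num⟩
  have hsne : s(x₁, y₁) ≠ s(x₂, y₂) := by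
    intro h
    rw [Sym2.eq_iff] at h
    rcases h with ⟨h1, _⟩ | ⟨h1, _⟩
    · exact hne12 x₁ hx₁ x₂ hx₂ h1
    · exact hne12 x₁ hx₁ y₂ hy₂ h1
  have hrec : numRecolored G c = 2 := by
    rw [numRecolored, hset, Set.ncard_pair hsne]
  have hcol : numNewColors G c = 1 := by
    rw [numNewColors, hset]
    have : c '' {s(x₁, y₁), s(x₂, y₂)} = {1} := by
      rw [Set.image_pair, hc1, hc2, Set.pair_eq_singleton]
    rw [this, Set.ncard_singleton]
  apply Nat.sInf_le
  exact ⟨c, hpc, by rw [hrec, hcol]⟩
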